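/- Let φ : ℂ³ → ℂ³ be given by φ(x, y, z) = (I·(x − y)³, (x + y)³, z³), and let φ̄ : ℂ³ → ℂ³ (the map obtained by applying complex conjugation to the coefficients of φ) be φ̄(x, y, z) = (−I·(x − y)³, (x + y)³, z³). Then there exists F ∈ GL₃(ℂ) such that for every v ∈ ℂ³ with v ≠ 0 there exists c ∈ ℂ with c ≠ 0 such that φ̄(v) = c • (F⁻¹·φ(F·v)). (That is, φ̄ = φ^F as endomorphisms of ℙ²(ℂ), so the field of moduli of φ is ℚ.) -/

import Mathlib

open Matrix

noncomputable def phiEx2 (v : Fin 3 → ℂ) : Fin 3 → ℂ :=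
  ![Complex.I * (v 0 - v 1) ^ 3, (v 0 + v 1) ^ 3, (v 2) ^ 3]

noncomputable def phiEx2Bar (v : Fin 3 → ℂ) : Fin 3 → ℂ :=
  ![-Complex.I * (v 0 - v 1) ^ 3, (v 0 + v 1) ^ 3, (v 2) ^ 3]

noncomputable def dEx2 : ℂ := (1 + Complex.I) / (Real.sqrt 2 : ℝ)

lemma dEx2_sq : dEx2 ^ 2 = Complex.I := by
  have h2 : ((Real.sqrt 2 : ℝ) : ℂ) ^ 2 = 2 := by
    rw [← Complex.ofReal_pow, Real.sq_sqrt (by norm_num)]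
    norm_num
  have hne : ((Real.sqrt 2 : ℝ) : ℂ) ≠ 0 := by
    intro h
    rw [h] at h2
    norm_num at h2
  rw [dEx2, div_pow, h2]
  have : (1 + Complex.I) ^ 2 = 2 * Complex.I := by
    ring_nf
    rw [Complex.I_sq]
    ring
  rw [this]
  field_simp

noncomputable def Mex2 : Matrix (Fin 3) (Fin 3) ℂ :=
  ![![0, -1, 0], ![1, 0, 0], ![0, 0, dEx2]]

noncomputable def Nex2 : Matrix (Fin 3) (Fin 3) ℂ :=
  ![![0, 1, 0], ![-1, 0, 0], ![0, 0, dEx2⁻¹]]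

lemma dEx2_ne : dEx2 ≠ 0 := by
  intro h
  have := dEx2_sq
  rw [h] at this
  simp at this
  exact Complex.I_ne_zero this.symm

lemma MN : Mex2 * Nex2 = 1 := by
  have := dEx2_ne
  ext i j
  rw [Matrix.mul_apply]
  fin_cases i <;> fin_cases j <;>
    simp [Mex2, Nex2, Matrix.mul_apply, Fin.sum_univ_three, mul_inv_cancel₀ this,
      Matrix.vecHead, Matrix.vecTail]

lemma NM : Nex2 * Mex2 = 1 := by
  have := dEx2_ne
  ext i j
  rw [Matrix.mul_apply]
  fin_cases i <;> fin_cases j <;>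
    simp [Mex2, Nex2, Matrix.mul_apply, Fin.sum_univ_three, inv_mul_cancel₀ this,
      Matrix.vecHead, Matrix.vecTail]

theorem example2_field_of_moduli_Q :
    ∃ F : Matrix.GeneralLinearGroup (Fin 3) ℂ,
      ∀ v : Fin 3 → ℂ, v ≠ 0 → ∃ c : ℂ, c ≠ 0 ∧
        phiEx2Bar v =
          c • ((↑(F⁻¹) : Matrix (Fin 3) (Fin 3) ℂ).mulVec
            (phiEx2 ((F : Matrix (Fin 3) (Fin 3) ℂ).mulVec v))) := by
  refine ⟨⟨Mex2, Nex2, MN, NM⟩, fun v _ => ⟨-Complex.I, by simp [Complex.I_ne_zero], ?_⟩⟩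
  have hFinv : (↑((⟨Mex2, Nex2, MN, NM⟩ : (Matrix (Fin 3) (Fin 3) ℂ)ˣ)⁻¹) :
      Matrix (Fin 3) (Fin 3) ℂ) = Nex2 := rfl
  have hF : (↑(⟨Mex2, Nex2, MN, NM⟩ : (Matrix (Fin 3) (Fin 3) ℂ)ˣ) :
      Matrix (Fin 3) (Fin 3) ℂ) = Mex2 := rfl
  rw [hFinv, hF]
  have hd : dEx2⁻¹ * (dEx2 * v 2) ^ 3 = Complex.I * v 2 ^ 3 := by
    rw [mul_pow, show dEx2⁻¹ * (dEx2 ^ 3 * v 2 ^ 3) =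
      (dEx2⁻¹ * dEx2) * (dEx2 ^ 2 * v 2 ^ 3) by ring, inv_mul_cancel₀ dEx2_ne, one_mul, dEx2_sq]
  funext i
  fin_cases i <;>
    simp [phiEx2, phiEx2Bar, Mex2, Nex2, Matrix.mulVec, dotProduct,
      Fin.sum_univ_three, Matrix.vecHead, Matrix.vecTail]
  all_goals first
    | (ring_nf; rw [Complex.I_sq]; ring)
    | (rw [hd]; ring_nf; rw [Complex.I_sq]; ring)
    | (rw [hd]; ring_nf)
    | ring_nf
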